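/- Let $k \ge 1$, fix $j \in \mathbb{N}$, and let $g_{j,1}, \dots, g_{j,k}, g_{j,k+1}$ be independent symmetric random variables on $[0,1]$ taking only the values $-1, 0, 1$, with $\int |g_{j,i}| = \mu_i$ for $i = 1, \dots, k$ and $\int |g_{j,k+1}| = \nu_j$. Set $f_j = \sum_{i=1}^k g_{j,i} + j\, g_{j,k+1}$. Then for every integer $m$ with $1 \le m \le k$: $\|f_j\|_{2m}^{2m} = F^{(j)}_m(\mu_1, \dots, \mu_k, \nu_j)$, where $F^{(j)}_m(\mu_1, \dots, \mu_k, \nu) = H_m(\mu_1, \dots, \mu_k) + \nu \sum_{l=1}^{m} \binom{2m}{2l} j^{2l} H_{m-l}(\mu_1, \dots, \mu_k)$. -/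

import Mathlib

open MeasureTheory ProbabilityTheory Finset
open scoped ENNReal NNReal

/-- The probability space `[0,1]` with Lebesgue measure. -/
noncomputable def mu01 : MeasureTheory.Measure ℝ :=
  MeasureTheory.volume.restrict (Set.Icc (0 : ℝ) 1)

instance : IsProbabilityMeasure mu01 :=
  ⟨by simp [mu01, Real.volume_Icc]⟩

lemma integrable_of_bdd {f : ℝ → ℝ} (hf : Measurable f) {C : ℝ} (h : ∀ x, |f x| ≤ C) :
    Integrable f mu01 :=
  (integrable_const C).mono' hf.aestronglyMeasurable
    (Filter.Eventually.of_forall (by simpa [Real.norm_eq_abs] using h))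

lemma moment_formula (g : ℝ → ℝ) (hg : Measurable g)
    (hval : ∀ x, g x ∈ ({-1, 0, 1} : Set ℝ))
    (hsymm : mu01.map g = mu01.map (fun x => - g x)) (n : ℕ) :
    ∫ x, g x ^ n ∂mu01
      = if n = 0 then 1 else if Even n then ∫ x, |g x| ∂mu01 else 0 := by
  rcases Nat.eq_zero_or_pos n with rfl | hn
  · simp
  rcases Nat.even_or_odd n with he | ho
  · rw [if_neg hn.ne', if_pos he]
    refine integral_congr_ae (Filter.Eventually.of_forall fun x => ?_)
    have h := hval x
    simp only [Set.mem_insert_iff, Set.mem_singleton_iff] at h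
    rcases h with h | h | h <;>
      simp [h, he.neg_one_pow, zero_pow hn.ne']
  · rw [if_neg hn.ne', if_neg (Nat.not_even_iff_odd.mpr ho)]
    have hmg : Measurable fun x => - g x := hg.neg
    have h1 : ∫ x, g x ^ n ∂mu01 = ∫ y, y ^ n ∂(mu01.map g) := by
      rw [integral_map hg.aemeasurable (measurable_id'.pow_const n).aestronglyMeasurable]
    have h2 : ∫ y, y ^ n ∂(mu01.map fun x => - g x) = ∫ x, (- g x) ^ n ∂mu01 := by
      rw [integral_map hmg.aemeasurable (measurable_id'.pow_const n).aestronglyMeasurable]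
    have h3 : ∫ x, (- g x) ^ n ∂mu01 = - ∫ x, g x ^ n ∂mu01 := by
      simp_rw [ho.neg_pow]; exact integral_neg _
    have : ∫ x, g x ^ n ∂mu01 = - ∫ x, g x ^ n ∂mu01 :=
      ((h1.trans (by rw [hsymm])).trans h2).trans h3
    linarith

section Indep

variable {Ω : Type*} [MeasurableSpace Ω] {μ : Measure Ω}

lemma iIndepFun_precomp {ι κ : Type*} {f : ι → Ω → ℝ}
    (h : iIndepFun f μ)
    (u : κ → ι) (hu : Function.Injective u) :
    iIndepFun (fun i => f (u i)) μ := by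
  classical
  rw [iIndepFun_iff_measure_inter_preimage_eq_mul] at h ⊢
  intro S sets H
  set sets' : ι → Set ℝ := fun i => ⋂ j ∈ S.filter (fun j => u j = i), sets j with hsets'
  have key : ∀ j ∈ S, sets' (u j) = sets j := by
    intro j hj
    have hfil : S.filter (fun j' => u j' = u j) = {j} := by
      ext j'
      simp only [Finset.mem_filter, Finset.mem_singleton, hu.eq_iff]
      exact ⟨fun h => h.2, fun h => ⟨h ▸ hj, h⟩⟩
    show (⋂ j' ∈ S.filter (fun j' => u j' = u j), sets j') = sets j
    rw [hfil]
    simp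
  have hmeas' : ∀ i, i ∈ S.image u → MeasurableSet (sets' i) := by
    intro i _
    exact Finset.measurableSet_biInter _ fun j hj => H j (Finset.mem_filter.mp hj).1
  have := h (S.image u) hmeas'
  have hL : (⋂ i ∈ S.image u, f i ⁻¹' sets' i) = ⋂ j ∈ S, f (u j) ⁻¹' sets j := by
    ext x
    simp only [Set.mem_iInter, Finset.mem_image]
    constructor
    · intro hx j hj
      have := hx (u j) ⟨j, hj, rfl⟩
      rwa [key j hj] at this
    · rintro hx i ⟨j, hj, rfl⟩
      rw [key j hj]; exact hx j hj
  rw [hL] at this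
  rw [this, Finset.prod_image (fun a _ b _ hab => hu hab)]
  exact Finset.prod_congr rfl fun j hj => by rw [key j hj]

lemma integral_finset_prod_pow [IsProbabilityMeasure μ] {ι : Type*}
    (g : ι → Ω → ℝ)
    (hmeas : ∀ i, Measurable (g i)) (hbdd : ∀ i x, |g i x| ≤ 1)
    (hindep : iIndepFun g μ) (c : ι → ℕ)
    (s : Finset ι) :
    ∫ x, ∏ i ∈ s, g i x ^ c i ∂μ = ∏ i ∈ s, ∫ x, g i x ^ c i ∂μ := by
  classical
  induction s using Finset.cons_induction with
  | empty => simp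
  | cons a s ha ih =>
    have hintf : ∀ i, Integrable (fun x => g i x ^ c i) μ := by
      intro i
      refine (integrable_const (1:ℝ)).mono' ((hmeas i).pow_const (c i)).aestronglyMeasurable
        (Filter.Eventually.of_forall fun x => ?_)
      rw [Real.norm_eq_abs, abs_pow]
      exact pow_le_one₀ (abs_nonneg _) (hbdd i x)
    have hintp : Integrable (fun x => ∏ i ∈ s, g i x ^ c i) μ := by
      refine (integrable_const (1:ℝ)).mono'
        (Finset.measurable_prod s fun i _ => (hmeas i).pow_const (c i)).aestronglyMeasurable
        (Filter.Eventually.of_forall fun x => ?_)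
      rw [Real.norm_eq_abs, Finset.abs_prod]
      refine Finset.prod_le_one (fun i _ => abs_nonneg _) fun i _ => ?_
      rw [abs_pow]; exact pow_le_one₀ (abs_nonneg _) (hbdd i x)
    have hpowindep : iIndepFun
        (fun i x => g i x ^ c i) μ :=
      hindep.comp (fun i y => y ^ c i) (fun i => measurable_id'.pow_const (c i))
    have hind : IndepFun (fun x => ∏ i ∈ s, g i x ^ c i) (fun x => g a x ^ c a) μ := by
      have h2 := hpowindep.indepFun_finsetProd_of_notMem
        (fun i => (hmeas i).pow_const (c i)) ha
      have : (∏ j ∈ s, fun x => g j x ^ c j) = fun x => ∏ i ∈ s, g i x ^ c i := by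
        funext x; simp
      rwa [this] at h2
    calc ∫ x, ∏ i ∈ Finset.cons a s ha, g i x ^ c i ∂μ
        = ∫ x, (∏ i ∈ s, g i x ^ c i) * g a x ^ c a ∂μ := by
          simp_rw [Finset.prod_cons]; congr 1; funext x; ring
      _ = (∫ x, ∏ i ∈ s, g i x ^ c i ∂μ) * ∫ x, g a x ^ c a ∂μ :=
          hind.integral_mul_eq_mul_integral hintp.aestronglyMeasurable (hintf a).aestronglyMeasurable
      _ = ∏ i ∈ Finset.cons a s ha, ∫ x, g i x ^ c i ∂μ := by
          rw [ih, Finset.prod_cons]; ring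

end Indep
def Ccoef (m α : ℕ) : ℕ :=
  ∑ c ∈ (Finset.Nat.antidiagonalTuple α m).filter (fun c => ∀ i, 1 ≤ c i),
    Nat.multinomial Finset.univ (fun i => 2 * c i)

def Hpoly (k m : ℕ) (μ : Fin k → ℝ) : ℝ :=
  ∑ α ∈ Finset.range (m + 1), ∑ S ∈ Finset.univ.powersetCard α,
    (Ccoef m α : ℝ) * ∏ i ∈ S, μ i

lemma multinomial_eq_of {β γ : Type*} {s : Finset β} {t : Finset γ} {f : β → ℕ} {g : γ → ℕ}
    (hs : ∑ i ∈ s, f i = ∑ i ∈ t, g i)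
    (hp : ∏ i ∈ s, (f i).factorial = ∏ i ∈ t, (g i).factorial) :
    Nat.multinomial s f = Nat.multinomial t g := by
  have h1 := Nat.multinomial_spec s f
  have h2 := Nat.multinomial_spec t g
  have hpos : 0 < ∏ i ∈ s, (f i).factorial :=
    Finset.prod_pos fun _ _ => Nat.factorial_pos _
  refine Nat.eq_of_mul_eq_mul_left hpos ?_
  rw [h1, hs, ← h2, hp]

lemma Ccoef_eq_zero {m α : ℕ} (h : m < α) : Ccoef m α = 0 := by
  rw [Ccoef]
  have : (Finset.Nat.antidiagonalTuple α m).filter (fun c => ∀ i, 1 ≤ c i) = ∅ := by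
    rw [Finset.filter_eq_empty_iff]
    intro c hc hpos
    rw [Finset.Nat.mem_antidiagonalTuple] at hc
    have : α ≤ m := by
      calc α = ∑ _i : Fin α, 1 := by simp
        _ ≤ ∑ i, c i := Finset.sum_le_sum fun i _ => hpos i
        _ = m := hc
    omega
  rw [this, Finset.sum_empty]

lemma fiber_mult_sum (k m' : ℕ) (S : Finset (Fin k)) :
    ∑ d ∈ (Finset.piAntidiag Finset.univ m').filter
        (fun d => Finset.univ.filter (fun i => d i ≠ 0) = S),
      Nat.multinomial Finset.univ (fun x => 2 * d x)
    = Ccoef m' S.card := by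
  classical
  rw [Ccoef]
  set α := S.card with hα
  set σ := S.orderIsoOfFin rfl with hσ
  have hmemS : ∀ a : Fin α, (σ a : Fin k) ∈ S := fun a => (σ a).2
  refine Finset.sum_nbij' (i := fun d => fun a : Fin α => d (σ a))
    (j := fun c => fun x => if h : x ∈ S then c (σ.symm ⟨x, h⟩) else 0)
    ?_ ?_ ?_ ?_ ?_
  · -- maps to
    intro d hd
    rw [Finset.mem_filter] at hd
    obtain ⟨hd1, hsupp⟩ := hd
    rw [Finset.mem_piAntidiag] at hd1
    have hiff : ∀ x, d x ≠ 0 ↔ x ∈ S := by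
      intro x
      rw [← hsupp, Finset.mem_filter]
      simp
    rw [Finset.mem_filter, Finset.Nat.mem_antidiagonalTuple]
    constructor
    · calc ∑ a : Fin α, d (σ a) = ∑ x : S, d x := Equiv.sum_comp σ.toEquiv (fun x : S => d x)
        _ = ∑ x ∈ S, d x := Finset.sum_coe_sort S (fun x => d x)
        _ = ∑ x ∈ Finset.univ, d x := Finset.sum_subset (Finset.subset_univ S)
            (fun x _ hx => by_contra fun h => hx ((hiff x).mp h))
        _ = m' := hd1.1
    · intro a
      have h2 := (hiff (σ a)).mpr (hmemS a)
      show 1 ≤ d (σ a)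
      omega
  · -- maps from
    intro c hc
    rw [Finset.mem_filter, Finset.Nat.mem_antidiagonalTuple] at hc
    obtain ⟨hc1, hcpos⟩ := hc
    rw [Finset.mem_filter, Finset.mem_piAntidiag]
    refine ⟨⟨?_, fun i _ => Finset.mem_univ i⟩, ?_⟩
    · calc ∑ x ∈ Finset.univ, (if h : x ∈ S then c (σ.symm ⟨x, h⟩) else 0)
          = ∑ x ∈ S, (if h : x ∈ S then c (σ.symm ⟨x, h⟩) else 0) :=
            (Finset.sum_subset (Finset.subset_univ S)
              (fun x _ hx => by rw [dif_neg hx])).symm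
        _ = ∑ x : S, (if h : (x : Fin k) ∈ S then c (σ.symm ⟨x, h⟩) else 0) :=
            (Finset.sum_coe_sort S _).symm
        _ = ∑ x : S, c (σ.symm x) := by
            refine Finset.sum_congr rfl fun x _ => ?_
            rw [dif_pos x.2]
        _ = ∑ a : Fin α, c a := by
            rw [← Equiv.sum_comp σ.toEquiv (fun x : S => c (σ.symm x))]
            simp
            rfl
        _ = m' := hc1
    · ext x
      simp only [Finset.mem_filter, Finset.mem_univ, true_and]
      constructor
      · intro hx
        by_contra hxS
        rw [dif_neg hxS] at hx
        exact hx rfl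
      · intro hx
        rw [dif_pos hx]
        have := hcpos (σ.symm ⟨x, hx⟩)
        omega
  · -- left inverse
    intro d hd
    rw [Finset.mem_filter] at hd
    have hiff : ∀ x, d x ≠ 0 ↔ x ∈ S := by
      intro x
      rw [← hd.2, Finset.mem_filter]
      simp
    funext x
    show (if h : x ∈ S then d (σ (σ.symm ⟨x, h⟩)) else 0) = d x
    by_cases hx : x ∈ S
    · rw [dif_pos hx, σ.apply_symm_apply]
    · rw [dif_neg hx]
      by_contra h
      exact hx ((hiff x).mp (Ne.symm h))
  · -- right inverse
    intro c hc
    funext a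
    show (if h : (σ a : Fin k) ∈ S then c (σ.symm ⟨(σ a : Fin k), h⟩) else 0) = c a
    rw [dif_pos (hmemS a)]
    have h1 : (⟨(σ a : Fin k), hmemS a⟩ : {x // x ∈ S}) = σ a := rfl
    rw [h1, σ.symm_apply_apply]
  · -- values
    intro d hd
    rw [Finset.mem_filter] at hd
    have hiff : ∀ x, d x ≠ 0 ↔ x ∈ S := by
      intro x
      rw [← hd.2, Finset.mem_filter]
      simp
    refine multinomial_eq_of ?_ ?_
    · calc ∑ x ∈ Finset.univ, 2 * d x
          = ∑ x ∈ S, 2 * d x := (Finset.sum_subset (Finset.subset_univ S)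
            (fun x _ hx => by
              have : d x = 0 := by_contra fun h => hx ((hiff x).mp h)
              rw [this, mul_zero])).symm
        _ = ∑ x : S, 2 * d x := (Finset.sum_coe_sort S _).symm
        _ = ∑ a : Fin α, 2 * d (σ a) := (Equiv.sum_comp σ.toEquiv (fun x : S => 2 * d x)).symm
    · calc ∏ x ∈ Finset.univ, (2 * d x).factorial
          = ∏ x ∈ S, (2 * d x).factorial := (Finset.prod_subset (Finset.subset_univ S)
            (fun x _ hx => by
              have : d x = 0 := by_contra fun h => hx ((hiff x).mp h)
              rw [this, mul_zero, Nat.factorial_zero])).symm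
        _ = ∏ x : S, (2 * d x).factorial := (Finset.prod_coe_sort S _).symm
        _ = ∏ a : Fin α, (2 * d (σ a)).factorial :=
            (Equiv.prod_comp σ.toEquiv (fun x : S => (2 * (d x)).factorial)).symm

lemma Hpoly_eq_sum_powerset (k m : ℕ) (μ : Fin k → ℝ) :
    Hpoly k m μ = ∑ S ∈ (Finset.univ : Finset (Fin k)).powerset,
      (Ccoef m S.card : ℝ) * ∏ i ∈ S, μ i := by
  classical
  have hfib : ∑ S ∈ (Finset.univ : Finset (Fin k)).powerset,
      (Ccoef m S.card : ℝ) * ∏ i ∈ S, μ i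
      = ∑ α ∈ Finset.range (k + 1), ∑ S ∈ ((Finset.univ : Finset (Fin k)).powerset).filter
          (fun S => S.card = α), (Ccoef m S.card : ℝ) * ∏ i ∈ S, μ i := by
    rw [Finset.sum_fiberwise_of_maps_to (fun S _ => ?_)]
    rw [Finset.mem_range, Nat.lt_succ_iff]
    calc S.card ≤ (Finset.univ : Finset (Fin k)).card := Finset.card_le_card (Finset.subset_univ S)
      _ = k := Finset.card_fin k
  rw [hfib]
  have hpc : ∀ α, ((Finset.univ : Finset (Fin k)).powerset).filter (fun S => S.card = α)
      = Finset.univ.powersetCard α := fun α => Finset.powersetCard_eq_filter.symm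
  simp_rw [hpc]
  have hcongr : ∀ α, ∑ S ∈ (Finset.univ : Finset (Fin k)).powersetCard α,
      (Ccoef m S.card : ℝ) * ∏ i ∈ S, μ i
      = ∑ S ∈ (Finset.univ : Finset (Fin k)).powersetCard α,
      (Ccoef m α : ℝ) * ∏ i ∈ S, μ i := by
    intro α
    refine Finset.sum_congr rfl fun S hS => ?_
    rw [(Finset.mem_powersetCard.mp hS).2]
  simp_rw [hcongr]
  set T : ℕ → ℝ := fun α => ∑ S ∈ (Finset.univ : Finset (Fin k)).powersetCard α,
      (Ccoef m α : ℝ) * ∏ i ∈ S, μ i with hT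
  have hTk : ∀ α, k < α → T α = 0 := by
    intro α hα
    have : (Finset.univ : Finset (Fin k)).powersetCard α = ∅ :=
      Finset.powersetCard_eq_empty.mpr (by simpa using hα)
    simp [hT, this]
  have hTm : ∀ α, m < α → T α = 0 := by
    intro α hα
    simp [hT, Ccoef_eq_zero hα]
  have h1 : Hpoly k m μ = ∑ α ∈ Finset.range (max m k + 1), T α := by
    rw [Hpoly]
    refine Finset.sum_subset (Finset.range_subset_range.mpr (by omega)) ?_
    intro α _ hα
    rw [Finset.mem_range, Nat.lt_succ_iff, Nat.not_le] at hα
    exact hTm α hα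
  have h2 : ∑ α ∈ Finset.range (k + 1), T α = ∑ α ∈ Finset.range (max m k + 1), T α := by
    refine Finset.sum_subset (Finset.range_subset_range.mpr (by omega)) ?_
    intro α _ hα
    rw [Finset.mem_range, Nat.lt_succ_iff, Nat.not_le] at hα
    exact hTk α hα
  rw [h1, ← h2]

lemma comb (k m' : ℕ) (μ : Fin k → ℝ) :
    ∑ c ∈ Finset.piAntidiag (Finset.univ : Finset (Fin k)) (2 * m'),
      (Nat.multinomial Finset.univ c : ℝ) *
        ∏ i, (if c i = 0 then (1:ℝ) else if Even (c i) then μ i else 0)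
    = Hpoly k m' μ := by
  classical
  -- (a) restrict to all-even tuples
  rw [← Finset.sum_filter_of_ne (p := fun c => ∀ i, Even (c i)) ?_]
  swap
  · intro c _ hF i
    by_contra hodd
    apply hF
    have hne : c i ≠ 0 := fun h => hodd (h ▸ Even.zero)
    have : (if c i = 0 then (1:ℝ) else if Even (c i) then μ i else 0) = 0 := by
      rw [if_neg hne, if_neg hodd]
    rw [Finset.prod_eq_zero (Finset.mem_univ i) this, mul_zero]
  -- (b) halve
  have hb : ∑ c ∈ (Finset.piAntidiag (Finset.univ : Finset (Fin k)) (2 * m')).filter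
        (fun c => ∀ i, Even (c i)),
      (Nat.multinomial Finset.univ c : ℝ) *
        ∏ i, (if c i = 0 then (1:ℝ) else if Even (c i) then μ i else 0)
      = ∑ d ∈ Finset.piAntidiag (Finset.univ : Finset (Fin k)) m',
        (Nat.multinomial Finset.univ (fun x => 2 * d x) : ℝ) *
          ∏ i, (if d i = 0 then (1:ℝ) else μ i) := by
    refine Finset.sum_nbij' (i := fun c x => c x / 2) (j := fun d x => 2 * d x) ?_ ?_ ?_ ?_ ?_
    · intro c hc
      rw [Finset.mem_filter, Finset.mem_piAntidiag] at hc
      obtain ⟨⟨hsum, _⟩, hev⟩ := hc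
      rw [Finset.mem_piAntidiag]
      refine ⟨?_, fun i _ => Finset.mem_univ i⟩
      show ∑ x, c x / 2 = m'
      have h2 : ∀ x, 2 * (c x / 2) = c x := by
        intro x; obtain ⟨t, ht⟩ := hev x; omega
      have : 2 * ∑ x, c x / 2 = 2 * m' := by
        rw [Finset.mul_sum]
        simp_rw [h2]
        exact hsum
      omega
    · intro d hd
      rw [Finset.mem_piAntidiag] at hd
      rw [Finset.mem_filter, Finset.mem_piAntidiag]
      exact ⟨⟨by rw [← Finset.mul_sum, hd.1], fun i _ => Finset.mem_univ i⟩,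
        fun i => ⟨d i, by ring⟩⟩
    · intro c hc
      rw [Finset.mem_filter] at hc
      funext x
      obtain ⟨t, ht⟩ := hc.2 x
      show 2 * (c x / 2) = c x
      omega
    · intro d _
      funext x
      show 2 * d x / 2 = d x
      omega
    · intro c hc
      rw [Finset.mem_filter] at hc
      have h2 : ∀ x, 2 * (c x / 2) = c x := by
        intro x; obtain ⟨t, ht⟩ := hc.2 x; omega
      beta_reduce
      congr 1
      · congr 1
        exact Nat.multinomial_congr fun x _ => (h2 x).symm
      · refine Finset.prod_congr rfl fun i _ => ?_
        by_cases h0 : c i = 0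
        · rw [if_pos h0, if_pos (by omega)]
        · rw [if_neg h0, if_pos (hc.2 i), if_neg (by have := h2 i; omega)]
  rw [hb]
  -- (c)/(d) group by support
  rw [← Finset.sum_fiberwise_of_maps_to
    (g := fun d : Fin k → ℕ => Finset.univ.filter (fun i => d i ≠ 0))
    (t := (Finset.univ : Finset (Fin k)).powerset)
    (fun d _ => Finset.mem_powerset.mpr (Finset.subset_univ _))]
  rw [Hpoly_eq_sum_powerset]
  refine Finset.sum_congr rfl fun S _ => ?_
  have hprod : ∀ d ∈ (Finset.piAntidiag (Finset.univ : Finset (Fin k)) m').filter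
      (fun d => Finset.univ.filter (fun i => d i ≠ 0) = S),
      (∏ i, (if d i = 0 then (1:ℝ) else μ i)) = ∏ i ∈ S, μ i := by
    intro d hd
    rw [Finset.mem_filter] at hd
    calc ∏ i, (if d i = 0 then (1:ℝ) else μ i)
        = ∏ i ∈ Finset.univ, (if d i ≠ 0 then μ i else 1) := by
          refine Finset.prod_congr rfl fun i _ => ?_
          by_cases h : d i = 0 <;> simp [h]
      _ = ∏ i ∈ Finset.univ.filter (fun i => d i ≠ 0), μ i := (Finset.prod_filter _ _).symm
      _ = ∏ i ∈ S, μ i := by rw [hd.2]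
  calc ∑ d ∈ (Finset.piAntidiag (Finset.univ : Finset (Fin k)) m').filter
        (fun d => Finset.univ.filter (fun i => d i ≠ 0) = S),
      (Nat.multinomial Finset.univ (fun x => 2 * d x) : ℝ) *
        ∏ i, (if d i = 0 then (1:ℝ) else μ i)
      = ∑ d ∈ (Finset.piAntidiag (Finset.univ : Finset (Fin k)) m').filter
        (fun d => Finset.univ.filter (fun i => d i ≠ 0) = S),
      (Nat.multinomial Finset.univ (fun x => 2 * d x) : ℝ) * ∏ i ∈ S, μ i :=
        Finset.sum_congr rfl fun d hd => by rw [hprod d hd]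
    _ = (Ccoef m' S.card : ℝ) * ∏ i ∈ S, μ i := by
        rw [← Finset.sum_mul, ← Nat.cast_sum, fiber_mult_sum k m' S]

/-- `F^{(j)}_m(μ₁,…,μ_k, ν) = H_m(μ) + ν ∑_{l=1}^m (2m choose 2l) j^{2l} H_{m-l}(μ)`. -/
def Fpoly (k j m : ℕ) (μ : Fin k → ℝ) (ν : ℝ) : ℝ :=
  Hpoly k m μ +
    ν * ∑ l ∈ Finset.Icc 1 m, ((2 * m).choose (2 * l) : ℝ) * (j : ℝ) ^ (2 * l) *
      Hpoly k (m - l) μ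

lemma abs_le_one_of_mem {y : ℝ} (h : y ∈ ({-1, 0, 1} : Set ℝ)) : |y| ≤ 1 := by
  simp only [Set.mem_insert_iff, Set.mem_singleton_iff] at h
  rcases h with rfl | rfl | rfl <;> norm_num

lemma key_moment {k : ℕ} (G : Fin k → ℝ → ℝ) (hGmeas : ∀ i, Measurable (G i))
    (hGval : ∀ i x, G i x ∈ ({-1, 0, 1} : Set ℝ))
    (hGindep : iIndepFun G mu01)
    (hGsymm : ∀ i, mu01.map (G i) = mu01.map (fun x => - G i x))
    (μ : Fin k → ℝ) (habs : ∀ i, ∫ x, |G i x| ∂mu01 = μ i) (m' : ℕ) :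
    ∫ x, (∑ i, G i x) ^ (2 * m') ∂mu01 = Hpoly k m' μ := by
  classical
  have hbdd : ∀ i x, |G i x| ≤ 1 := fun i x => abs_le_one_of_mem (hGval i x)
  have hint : ∀ c : Fin k → ℕ, Integrable (fun x => ∏ i, G i x ^ c i) mu01 := by
    intro c
    refine integrable_of_bdd (Finset.measurable_prod _ fun i _ => (hGmeas i).pow_const _)
      (C := 1) fun x => ?_
    rw [Finset.abs_prod]
    refine Finset.prod_le_one (fun i _ => abs_nonneg _) fun i _ => ?_
    rw [abs_pow]; exact pow_le_one₀ (abs_nonneg _) (hbdd i x)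
  have hexp : ∀ x, (∑ i, G i x) ^ (2 * m')
      = ∑ c ∈ Finset.piAntidiag Finset.univ (2 * m'),
          (Nat.multinomial Finset.univ c : ℝ) * ∏ i, G i x ^ c i := fun x =>
    Finset.sum_pow_eq_sum_piAntidiag Finset.univ (fun i => G i x) (2 * m')
  simp_rw [hexp]
  rw [integral_finset_sum _ (fun c _ => (hint c).const_mul _)]
  have hstep : ∀ c ∈ Finset.piAntidiag (Finset.univ : Finset (Fin k)) (2 * m'),
      ∫ x, (Nat.multinomial Finset.univ c : ℝ) * ∏ i, G i x ^ c i ∂mu01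
      = (Nat.multinomial Finset.univ c : ℝ) *
          ∏ i, (if c i = 0 then (1:ℝ) else if Even (c i) then μ i else 0) := by
    intro c _
    rw [integral_const_mul, integral_finset_prod_pow G hGmeas hbdd hGindep c Finset.univ]
    congr 1
    refine Finset.prod_congr rfl fun i _ => ?_
    rw [moment_formula (G i) (hGmeas i) (hGval i) (hGsymm i), habs i]
  rw [Finset.sum_congr rfl hstep]
  exact comb k m' μ

/-- **Lemma `normf`.** If `g₁, …, g_k, g_{k+1}` are independent symmetric `{-1,0,1}`-valued
random variables with `∫ |gᵢ| = μᵢ` for `i ≤ k` and `∫ |g_{k+1}| = ν`, and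
`f = ∑_{i=1}^k gᵢ + j g_{k+1}`, then `‖f‖_{2m}^{2m} = F^{(j)}_m(μ₁, …, μ_k, ν)` for
every `1 ≤ m ≤ k`. -/
theorem norm_sum_three_valued_perturbed (k : ℕ) (hk : 1 ≤ k) (j : ℕ) (hj : 1 ≤ j)
    (μvec : Fin k → ℝ) (ν : ℝ) (g : Fin (k + 1) → ℝ → ℝ)
    (hmeas : ∀ i, Measurable (g i))
    (hval : ∀ i x, g i x ∈ ({-1, 0, 1} : Set ℝ))
    (hindep : iIndepFun g mu01)
    (hsymm : ∀ i, mu01.map (g i) = mu01.map (fun x => - g i x))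
    (habs : ∀ i : Fin k, ∫ x, |g (Fin.castSucc i) x| ∂mu01 = μvec i)
    (habslast : ∫ x, |g (Fin.last k) x| ∂mu01 = ν)
    (m : ℕ) (hm1 : 1 ≤ m) (hmk : m ≤ k) :
    ∫ x, ((∑ i : Fin k, g (Fin.castSucc i) x) + (j : ℝ) * g (Fin.last k) x) ^ (2 * m) ∂mu01
      = Fpoly k j m μvec ν := by
  classical
  set G : Fin k → ℝ → ℝ := fun i => g (Fin.castSucc i) with hG
  set B : ℝ → ℝ := g (Fin.last k) with hB
  have hGmeas : ∀ i, Measurable (G i) := fun i => hmeas _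
  have hGval : ∀ i x, G i x ∈ ({-1, 0, 1} : Set ℝ) := fun i x => hval _ x
  have hGsymm : ∀ i, mu01.map (G i) = mu01.map (fun x => - G i x) := fun i => hsymm _
  have hGindep : iIndepFun G mu01 :=
    iIndepFun_precomp hindep Fin.castSucc (Fin.castSucc_injective k)
  have hBmeas : Measurable B := hmeas _
  have hBbdd : ∀ x, |B x| ≤ 1 := fun x => abs_le_one_of_mem (hval _ x)
  have hAmeas : Measurable fun x => ∑ i, G i x :=
    Finset.measurable_sum _ fun i _ => hGmeas i
  have hIA : ∀ l : ℕ, ∫ x, (∑ i, G i x) ^ (2 * l) ∂mu01 = Hpoly k l μvec :=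
    key_moment G hGmeas hGval hGindep hGsymm μvec habs
  have hEB : ∀ t : ℕ, ∫ x, B x ^ t ∂mu01
      = if t = 0 then 1 else if Even t then ν else 0 := by
    intro t
    rw [moment_formula B hBmeas (fun x => hval _ x) (hsymm _), habslast]
  have hAbdd : ∀ x, |∑ i, G i x| ≤ (k : ℝ) := by
    intro x
    calc |∑ i, G i x| ≤ ∑ i, |G i x| := Finset.abs_sum_le_sum_abs _ _
      _ ≤ ∑ _i : Fin k, (1:ℝ) := Finset.sum_le_sum fun i _ => abs_le_one_of_mem (hGval i x)
      _ = (k:ℝ) := by simp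
  have hcBbdd : ∀ x, |(j:ℝ) * B x| ≤ (j:ℝ) := by
    intro x
    rw [abs_mul, abs_of_nonneg (by positivity : (0:ℝ) ≤ (j:ℝ))]
    have h1 := hBbdd x
    have h2 : (0:ℝ) ≤ (j:ℝ) := by positivity
    nlinarith [abs_nonneg (B x)]
  have hAB : IndepFun (fun x => ∑ i, G i x) B mu01 := by
    have hlast : Fin.last k ∉ Finset.univ.image (Fin.castSucc (n := k)) := by
      simp only [Finset.mem_image, Finset.mem_univ, true_and, not_exists]
      exact fun i => (Fin.castSucc_lt_last i).ne
    have h1 := hindep.indepFun_finsetSum_of_notMem hmeas hlast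
    have h2 : ∑ i ∈ Finset.univ.image (Fin.castSucc (n := k)), g i = fun x => ∑ i, G i x := by
      rw [Finset.sum_image (fun a _ b _ h => Fin.castSucc_injective k h)]
      funext x
      simp [hG]
    rwa [h2] at h1
  have hintterm : ∀ t : ℕ, Integrable
      (fun x => ((j:ℝ) * B x) ^ t * (∑ i, G i x) ^ (2 * m - t) * ((2 * m).choose t : ℝ))
      mu01 := by
    intro t
    refine integrable_of_bdd ?_ (C := (j:ℝ) ^ t * (k:ℝ) ^ (2 * m - t) * ((2 * m).choose t : ℝ))
      fun x => ?_
    · exact (((hBmeas.const_mul _).pow_const t).mul (hAmeas.pow_const _)).mul measurable_const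
    · rw [abs_mul, abs_mul, abs_pow, abs_pow, abs_of_nonneg (by positivity :
        (0:ℝ) ≤ ((2 * m).choose t : ℝ))]
      have h1 : |(j:ℝ) * B x| ^ t ≤ (j:ℝ) ^ t :=
        pow_le_pow_left₀ (abs_nonneg _) (hcBbdd x) t
      have h2 : |∑ i, G i x| ^ (2 * m - t) ≤ (k:ℝ) ^ (2 * m - t) :=
        pow_le_pow_left₀ (abs_nonneg _) (hAbdd x) _
      have h4 : (0:ℝ) ≤ |∑ i, G i x| ^ (2 * m - t) := by positivity
      have h5 : (0:ℝ) ≤ ((2 * m).choose t : ℝ) := by positivity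
      have h6 : (0:ℝ) ≤ (j:ℝ) ^ t := by positivity
      exact mul_le_mul_of_nonneg_right (mul_le_mul h1 h2 h4 h6) h5
  have hexp : ∀ x, ((∑ i, G i x) + (j:ℝ) * B x) ^ (2 * m)
      = ∑ t ∈ Finset.range (2 * m + 1),
          ((j:ℝ) * B x) ^ t * (∑ i, G i x) ^ (2 * m - t) * ((2 * m).choose t : ℝ) := by
    intro x
    rw [add_comm]
    exact add_pow _ _ _
  show ∫ x, ((∑ i, G i x) + (j:ℝ) * B x) ^ (2 * m) ∂mu01 = Fpoly k j m μvec ν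
  simp_rw [hexp]
  rw [integral_finset_sum _ (fun t _ => hintterm t)]
  have hterm : ∀ t ∈ Finset.range (2 * m + 1),
      ∫ x, ((j:ℝ) * B x) ^ t * (∑ i, G i x) ^ (2 * m - t) * ((2 * m).choose t : ℝ) ∂mu01
      = ((2 * m).choose t : ℝ) *
          ((j:ℝ) ^ t * (if t = 0 then (1:ℝ) else if Even t then ν else 0)) *
          ∫ x, (∑ i, G i x) ^ (2 * m - t) ∂mu01 := by
    intro t _
    have hpind : IndepFun (fun x => ((j:ℝ) * B x) ^ t)
        (fun x => (∑ i, G i x) ^ (2 * m - t)) mu01 :=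
      hAB.symm.comp ((measurable_id'.const_mul ((j:ℝ))).pow_const t)
        (measurable_id'.pow_const (2 * m - t))
    have hint1 : Integrable (fun x => ((j:ℝ) * B x) ^ t) mu01 := by
      refine integrable_of_bdd (((hBmeas.const_mul _).pow_const t)) (C := (j:ℝ) ^ t)
        fun x => ?_
      rw [abs_pow]
      exact pow_le_pow_left₀ (abs_nonneg _) (hcBbdd x) t
    have hint2 : Integrable (fun x => (∑ i, G i x) ^ (2 * m - t)) mu01 := by
      refine integrable_of_bdd (hAmeas.pow_const _) (C := (k:ℝ) ^ (2 * m - t)) fun x => ?_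
      rw [abs_pow]
      exact pow_le_pow_left₀ (abs_nonneg _) (hAbdd x) _
    calc ∫ x, ((j:ℝ) * B x) ^ t * (∑ i, G i x) ^ (2 * m - t) * ((2 * m).choose t : ℝ) ∂mu01
        = (∫ x, ((j:ℝ) * B x) ^ t * (∑ i, G i x) ^ (2 * m - t) ∂mu01) *
            ((2 * m).choose t : ℝ) := by
          rw [integral_mul_const]
      _ = ((∫ x, ((j:ℝ) * B x) ^ t ∂mu01) * ∫ x, (∑ i, G i x) ^ (2 * m - t) ∂mu01) *
            ((2 * m).choose t : ℝ) := by
          have hmul := hpind.integral_mul_eq_mul_integral hint1.aestronglyMeasurable hint2.aestronglyMeasurable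
          rw [show ((fun x => ((j:ℝ) * B x) ^ t) * fun x => (∑ i, G i x) ^ (2 * m - t))
              = (fun x => ((j:ℝ) * B x) ^ t * (∑ i, G i x) ^ (2 * m - t)) from rfl] at hmul
          rw [hmul]
      _ = _ := by
          have : ∫ x, ((j:ℝ) * B x) ^ t ∂mu01 = (j:ℝ) ^ t * ∫ x, B x ^ t ∂mu01 := by
            simp_rw [mul_pow]
            rw [integral_const_mul]
          rw [this, hEB t]
          ring
  rw [Finset.sum_congr rfl hterm]
  -- now pure arithmetic
  set IA : ℕ → ℝ := fun s => ∫ x, (∑ i, G i x) ^ s ∂mu01 with hIAdef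
  have hfil : ∑ t ∈ Finset.range (2 * m + 1),
      ((2 * m).choose t : ℝ) * ((j:ℝ) ^ t * (if t = 0 then (1:ℝ) else if Even t then ν else 0))
        * IA (2 * m - t)
      = ∑ t ∈ (Finset.range (2 * m + 1)).filter (fun t => Even t),
      ((2 * m).choose t : ℝ) * ((j:ℝ) ^ t * (if t = 0 then (1:ℝ) else if Even t then ν else 0))
        * IA (2 * m - t) := by
    refine (Finset.sum_filter_of_ne ?_).symm
    intro t _ hne
    by_contra hodd
    apply hne
    have ht0 : t ≠ 0 := fun h => hodd (h ▸ Even.zero)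
    rw [if_neg ht0, if_neg hodd]
    ring
  rw [hfil]
  have hreindex : ∑ t ∈ (Finset.range (2 * m + 1)).filter (fun t => Even t),
      ((2 * m).choose t : ℝ) * ((j:ℝ) ^ t * (if t = 0 then (1:ℝ) else if Even t then ν else 0))
        * IA (2 * m - t)
      = ∑ l ∈ Finset.range (m + 1),
      ((2 * m).choose (2 * l) : ℝ) *
        ((j:ℝ) ^ (2 * l) * (if l = 0 then (1:ℝ) else ν)) * IA (2 * (m - l)) := by
    refine Finset.sum_nbij' (i := fun t => t / 2) (j := fun l => 2 * l) ?_ ?_ ?_ ?_ ?_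
    · intro t ht
      rw [Finset.mem_filter, Finset.mem_range] at ht
      rw [Finset.mem_range]
      show t / 2 < m + 1
      omega
    · intro l hl
      rw [Finset.mem_range] at hl
      refine Finset.mem_filter.mpr ⟨Finset.mem_range.mpr (show 2 * l < 2 * m + 1 by omega),
        show Even (2 * l) from ⟨l, by ring⟩⟩
    · intro t ht
      rw [Finset.mem_filter] at ht
      obtain ⟨u, hu⟩ := ht.2
      show 2 * (t / 2) = t
      omega
    · intro l _
      show 2 * l / 2 = l
      omega
    · intro t ht
      rw [Finset.mem_filter, Finset.mem_range] at ht
      obtain ⟨u, hu⟩ := ht.2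
      have h2t : 2 * (t / 2) = t := by omega
      have hsub : 2 * m - t = 2 * (m - t / 2) := by omega
      show ((2 * m).choose t : ℝ) *
          ((j:ℝ) ^ t * (if t = 0 then (1:ℝ) else if Even t then ν else 0)) * IA (2 * m - t)
        = ((2 * m).choose (2 * (t / 2)) : ℝ) *
          ((j:ℝ) ^ (2 * (t / 2)) * (if t / 2 = 0 then (1:ℝ) else ν)) * IA (2 * (m - t / 2))
      have hite : (if t = 0 then (1:ℝ) else if Even t then ν else 0)
          = (if t / 2 = 0 then (1:ℝ) else ν) := by
        by_cases h0 : t = 0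
        · rw [if_pos h0, if_pos (show t / 2 = 0 by omega)]
        · rw [if_neg h0, if_pos ht.2, if_neg (show ¬ t / 2 = 0 by omega)]
      rw [h2t, hsub, hite]
  rw [hreindex]
  have hIA' : ∀ l : ℕ, IA (2 * l) = Hpoly k l μvec := hIA
  rw [Finset.sum_range_succ']
  rw [Fpoly]
  have h0term : ((2 * m).choose (2 * 0) : ℝ) *
      ((j:ℝ) ^ (2 * 0) * (if (0:ℕ) = 0 then (1:ℝ) else ν)) * IA (2 * (m - 0))
      = Hpoly k m μvec := by
    simp [hIA' m]
  rw [h0term]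
  have hrest : ∑ i ∈ Finset.range m,
      ((2 * m).choose (2 * (i + 1)) : ℝ) *
        ((j:ℝ) ^ (2 * (i + 1)) * (if i + 1 = 0 then (1:ℝ) else ν)) * IA (2 * (m - (i + 1)))
      = ν * ∑ l ∈ Finset.Icc 1 m, ((2 * m).choose (2 * l) : ℝ) * (j : ℝ) ^ (2 * l) *
          Hpoly k (m - l) μvec := by
    rw [Finset.mul_sum, show Finset.Icc 1 m = Finset.Ico 1 (m + 1) from (Finset.Ico_add_one_right_eq_Icc 1 m).symm,
      Finset.sum_Ico_eq_sum_range]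
    simp only [Nat.add_sub_cancel]
    refine Finset.sum_congr rfl fun i _ => ?_
    have h1 : 1 + i = i + 1 := by omega
    rw [h1, if_neg (Nat.succ_ne_zero i), hIA' (m - (i + 1))]
    ring
  rw [hrest]
  ring
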